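/- arXiv:1710.03580 — 5 statements merged into one kernel-verified Lean document; each statement's English description precedes it below -/
import Mathlib

section
/- Assume condition (E) and φ(z) = z + b with b ∈ ℂ. If C_φ is bounded on H(E,β), then Re(b) ≥ 0. (Proof idea: the unit vectors q_k(z) = β_k^{-1} e^{-λ_k z} satisfy ‖C_φ q_k‖ = e^{-λ_k Re(b)}, and since λ_k → +∞, boundedness of (‖C_φ q_k‖) forces Re(b) ≥ 0.) -/
open Filter Complex

/-- Under condition (E), for `φ(z) = z + b`: if `C_φ` is bounded on `H(E,β)`
(there is `C` such that for every `f ∈ H(E,β)`, the transformed coefficient sequence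
`a_n e^{-λ_n b}` is in `H(E,β)` with `‖C_φ f‖² ≤ C ‖f‖²`), then `Re b ≥ 0`. -/
theorem stmt_12 (Λ : ℕ → ℝ) (β : ℕ → ℝ) (b : ℂ)
    (hmono : StrictMono Λ) (hpos : ∀ n, 0 ≤ Λ n)
    (htop : Tendsto Λ atTop atTop)
    (hL : IsBoundedUnder (· ≤ ·) atTop (fun n : ℕ => Real.log ((n : ℝ) + 1) / Λ n))
    (hβ : ∀ n, 0 < β n)
    (hE : Tendsto (fun n => Real.log (β n) / Λ n) atTop atTop)
    (hbdd : ∃ C : ℝ, ∀ a : ℕ → ℂ, Summable (fun n => ‖a n‖ ^ 2 * (β n) ^ 2) →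
      Summable (fun n => ‖a n * Complex.exp (-(Λ n : ℂ) * b)‖ ^ 2 * (β n) ^ 2) ∧
      ∑' n, ‖a n * Complex.exp (-(Λ n : ℂ) * b)‖ ^ 2 * (β n) ^ 2
        ≤ C * ∑' n, ‖a n‖ ^ 2 * (β n) ^ 2) :
    0 ≤ b.re := by
  by_contra h
  push_neg at h
  obtain ⟨C, hC⟩ := hbdd
  have hexp : Tendsto (fun k => Real.exp ((-2 * b.re) * Λ k)) atTop atTop :=
    Real.tendsto_exp_atTop.comp (htop.const_mul_atTop (by linarith))
  obtain ⟨k, hk⟩ := (hexp.eventually_gt_atTop C).exists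
  set a : ℕ → ℂ := fun n => if n = k then ((β k : ℂ))⁻¹ else 0 with ha
  have haz : ∀ n, n ≠ k → a n = 0 := by
    intro n hn; simp [ha, hn]
  have hak : a k = ((β k : ℂ))⁻¹ := by simp [ha]
  have hsum : Summable (fun n => ‖a n‖ ^ 2 * (β n) ^ 2) := by
    apply summable_of_ne_finset_zero (s := {k})
    intro n hn
    simp only [Finset.mem_singleton] at hn
    simp [haz n hn]
  obtain ⟨hs2, hle⟩ := hC a hsum
  have h1 : ∑' n, ‖a n‖ ^ 2 * (β n) ^ 2 = 1 := by
    rw [tsum_eq_single k (fun n hn => by simp [haz n hn])]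
    rw [hak]
    rw [norm_inv, Complex.norm_real, Real.norm_eq_abs, abs_of_pos (hβ k)]
    field_simp
    exact div_self (hβ k).ne'
  have h2 : ∑' n, ‖a n * Complex.exp (-(Λ n : ℂ) * b)‖ ^ 2 * (β n) ^ 2
      = Real.exp ((-2 * b.re) * Λ k) := by
    rw [tsum_eq_single k (fun n hn => by simp [haz n hn])]
    rw [hak, norm_mul, norm_inv, Complex.norm_real, Real.norm_eq_abs, abs_of_pos (hβ k),
      Complex.norm_exp]
    have hre : (-(Λ k : ℂ) * b).re = -(Λ k) * b.re := by simp
    rw [hre]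
    rw [mul_pow, ← Real.exp_nat_mul]
    have : (β k)⁻¹ ^ 2 * ((2:ℕ) * (-Λ k * b.re)).exp * β k ^ 2
        = Real.exp (-2 * b.re * Λ k) * ((β k)⁻¹ ^ 2 * β k ^ 2) := by
      push_cast; ring_nf
    rw [this]
    have : (β k)⁻¹ ^ 2 * β k ^ 2 = 1 := by
      field_simp
      exact div_self (hβ k).ne'
    rw [this, mul_one]
  rw [h1, h2, mul_one] at hle
  exact absurd hle (not_le.mpr hk)
end

section
/- Assume condition (E) with λ_1 > 0. Suppose φ is entire and there exists B > 0 such that Σ_{n≥1} β_n^{-2} e^{-2λ_n Re(φ(w))} ≤ B Σ_{n≥1} β_n^{-2} e^{-2λ_n Re(w)} for all w ∈ ℂ. Then φ(z) = z + b for some constant b ∈ ℂ. (That is, z - φ(z) must be constant.) -/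
open Filter Complex

lemma stmt13_exp_neg_two_log (y : ℝ) (hy : 0 < y) :
    Real.exp (-2 * Real.log y) = 1 / y ^ 2 := by
  rw [show (-2 : ℝ) * Real.log y = -(((2:ℕ) : ℝ) * Real.log y) by push_cast; ring,
    Real.exp_neg, Real.exp_nat_mul, Real.exp_log hy, one_div]

/-- Under condition (E) with `λ_1 > 0`: if `φ` is entire and there is `B > 0`
with `Σ β_n⁻² e^{-2 λ_n Re(φ w)} ≤ B Σ β_n⁻² e^{-2 λ_n Re w}` for all `w`
(i.e. `‖k_{φ(w)}‖² ≤ B ‖k_w‖²`), then `φ(z) = z + b` for some constant `b ∈ ℂ`. -/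
theorem stmt_13 (Λ : ℕ → ℝ) (β : ℕ → ℝ) (φ : ℂ → ℂ) (B : ℝ)
    (hmono : StrictMono Λ) (hpos : ∀ n, 0 ≤ Λ n)
    (htop : Tendsto Λ atTop atTop)
    (hL : IsBoundedUnder (· ≤ ·) atTop (fun n : ℕ => Real.log ((n : ℝ) + 1) / Λ n))
    (hβ : ∀ n, 0 < β n)
    (hE : Tendsto (fun n => Real.log (β n) / Λ n) atTop atTop)
    (hΛ0 : 0 < Λ 0)
    (hφ : Differentiable ℂ φ)
    (hB : 0 < B)
    (hineq : ∀ w : ℂ,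
      ∑' n, Real.exp (-2 * Λ n * (φ w).re) / (β n) ^ 2
        ≤ B * ∑' n, Real.exp (-2 * Λ n * w.re) / (β n) ^ 2) :
    ∃ b : ℂ, ∀ z : ℂ, φ z = z + b := by
  -- Λ n > 0 for all n
  have hΛpos : ∀ n, 0 < Λ n := fun n => lt_of_lt_of_le hΛ0 (hmono.monotone (Nat.zero_le n))
  -- Step 1: summability of the kernel series for every x
  have hsum : ∀ x : ℝ, Summable (fun n => Real.exp (-2 * Λ n * x) / (β n) ^ 2) := by
    intro x
    obtain ⟨L, hLb⟩ := hL
    rw [eventually_map] at hLb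
    set M : ℝ := max L 1 with hMdef
    have hM1 : (1 : ℝ) ≤ M := le_max_right _ _
    have hM0 : 0 < M := lt_of_lt_of_le one_pos hM1
    have hev : ∀ᶠ n in atTop, Real.exp (-2 * Λ n * x) / (β n) ^ 2 ≤ 1 / ((n : ℝ) + 1) ^ 2 := by
      filter_upwards [hLb, hE.eventually_ge_atTop (|x| + M)] with n hn1 hn2
      have hΛn := hΛpos n
      have hβn := hβ n
      have hrw : Real.exp (-2 * Λ n * x) / (β n) ^ 2
          = Real.exp (-2 * Λ n * x - 2 * Real.log (β n)) := by
        rw [Real.exp_sub]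
        congr 1
        rw [show (2 : ℝ) * Real.log (β n) = (((2:ℕ):ℝ)) * Real.log (β n) by push_cast; ring,
          Real.exp_nat_mul, Real.exp_log hβn]
      have hn1pos : (0 : ℝ) < (n : ℝ) + 1 := by positivity
      rw [hrw, ← stmt13_exp_neg_two_log _ hn1pos]
      apply Real.exp_le_exp.2
      have hlogβ : (|x| + M) * Λ n ≤ Real.log (β n) := (le_div_iff₀ hΛn).mp hn2
      have hlogn : Real.log ((n : ℝ) + 1) ≤ M * Λ n := by
        have h1 : Real.log ((n : ℝ) + 1) / Λ n ≤ M := le_trans hn1 (le_max_left _ _)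
        calc Real.log ((n : ℝ) + 1) = Real.log ((n : ℝ) + 1) / Λ n * Λ n := by field_simp
          _ ≤ M * Λ n := mul_le_mul_of_nonneg_right h1 hΛn.le
      nlinarith [abs_nonneg x, neg_abs_le x]
    obtain ⟨N, hN⟩ := eventually_atTop.mp hev
    have hgsum : Summable (fun n : ℕ => 1 / ((n : ℝ) + 1) ^ 2) := by
      have h := (summable_nat_add_iff (f := fun n : ℕ => 1 / (n : ℝ) ^ 2) 1).mpr
        (Real.summable_one_div_nat_pow.mpr one_lt_two)
      refine h.congr fun n => by push_cast; ring
    refine (summable_nat_add_iff (f := fun n : ℕ => Real.exp (-2 * Λ n * x) / (β n) ^ 2) N).mp ?_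
    refine Summable.of_nonneg_of_le (fun n => by positivity)
      (fun n => hN (n + N) (Nat.le_add_left N n)) ?_
    exact (summable_nat_add_iff (f := fun n : ℕ => 1 / ((n : ℝ) + 1) ^ 2) N).mpr hgsum
  -- positivity of the kernel series
  have hStsum : ∀ x : ℝ, 0 < ∑' n, Real.exp (-2 * Λ n * x) / (β n) ^ 2 := by
    intro x
    refine Summable.tsum_pos (hsum x) (fun n => by positivity) 0 (div_pos (Real.exp_pos _) (pow_pos (hβ 0) 2))
  -- Step 2: Re (z - φ z) is bounded above
  set C : ℝ := |Real.log B| / (2 * Λ 0) + 1 with hCdef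
  have hC0 : 0 < C := by
    have h := div_nonneg (abs_nonneg (Real.log B)) (by linarith : (0:ℝ) ≤ 2 * Λ 0)
    rw [hCdef]; linarith
  have hCB : B < Real.exp (2 * Λ 0 * C) := by
    have h1 : Real.log B ≤ |Real.log B| := le_abs_self _
    have h2 : 2 * Λ 0 * C = |Real.log B| + 2 * Λ 0 := by
      rw [hCdef]; field_simp
    calc B = Real.exp (Real.log B) := (Real.exp_log hB).symm
      _ < Real.exp (2 * Λ 0 * C) := by
          apply Real.exp_lt_exp.2; rw [h2]; linarith [hΛ0]
  have hre : ∀ w : ℂ, w.re - (φ w).re ≤ C := by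
    intro w
    by_contra hcon
    push_neg at hcon
    have key : ∀ n, Real.exp (2 * Λ 0 * C) * (Real.exp (-2 * Λ n * w.re) / (β n) ^ 2)
        ≤ Real.exp (-2 * Λ n * (φ w).re) / (β n) ^ 2 := by
      intro n
      have hΛn := hΛpos n
      have hβn := hβ n
      rw [← mul_div_assoc, ← Real.exp_add]
      apply div_le_div_of_nonneg_right ?_ (by positivity)
      · apply Real.exp_le_exp.2
        have hΛ0n : Λ 0 ≤ Λ n := hmono.monotone (Nat.zero_le n)
        nlinarith
    have h1 : Real.exp (2 * Λ 0 * C) * (∑' n, Real.exp (-2 * Λ n * w.re) / (β n) ^ 2)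
        ≤ ∑' n, Real.exp (-2 * Λ n * (φ w).re) / (β n) ^ 2 := by
      rw [← tsum_mul_left]
      exact Summable.tsum_le_tsum key ((hsum w.re).mul_left _) (hsum (φ w).re)
    have h2 := hineq w
    have hS := hStsum w.re
    nlinarith
  -- Step 3: exp (z - φ z) is a bounded entire function, hence constant
  set ψ : ℂ → ℂ := fun z => z - φ z with hψdef
  have hψdiff : Differentiable ℂ ψ := differentiable_id.sub hφ
  have hgdiff : Differentiable ℂ (fun z => Complex.exp (ψ z)) := hψdiff.cexp
  have hgb : Bornology.IsBounded (Set.range fun z => Complex.exp (ψ z)) := by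
    rw [Metric.isBounded_iff_subset_closedBall 0]
    refine ⟨Real.exp C, ?_⟩
    rintro y ⟨z, rfl⟩
    simp only [Metric.mem_closedBall, dist_zero_right, Complex.norm_exp]
    exact Real.exp_le_exp.2 (by simp only [hψdef, Complex.sub_re]; linarith [hre z])
  have hgconst : ∀ z : ℂ, Complex.exp (ψ z) = Complex.exp (ψ 0) :=
    fun z => hgdiff.apply_eq_apply_of_bounded hgb z 0
  -- deduce ψ' = 0
  have hψderiv : ∀ z : ℂ, deriv ψ z = 0 := by
    intro z
    have hd : HasDerivAt (fun z => Complex.exp (ψ z)) (Complex.exp (ψ z) * deriv ψ z) z :=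
      ((hψdiff z).hasDerivAt).cexp
    have hzero : deriv (fun z => Complex.exp (ψ z)) z = 0 := by
      have : (fun z : ℂ => Complex.exp (ψ z)) = fun _ => Complex.exp (ψ 0) :=
        funext hgconst
      rw [this, deriv_const]
    rw [hd.deriv] at hzero
    exact (mul_eq_zero.mp hzero).resolve_left (Complex.exp_ne_zero _)
  have hψconst : ∀ z : ℂ, ψ z = ψ 0 :=
    fun z => is_const_of_deriv_eq_zero hψdiff hψderiv z 0
  refine ⟨φ 0, fun z => ?_⟩
  have h1 := hψconst z
  simp only [hψdef] at h1
  have h0 : (0 : ℂ) - φ 0 = -φ 0 := by ring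
  rw [h0] at h1
  linear_combination -h1
end

section
/- Assume condition (E) with λ_1 > 0 and let φ be entire. The composition operator C_φ is bounded on H(E,β) if and only if φ(z) = z + b for some b ∈ ℂ with Re(b) ≥ 0; and in that case the operator norm equals ‖C_φ‖ = e^{-λ_1 Re(b)}. -/
open Filter Complex

/-- `a` is the coefficient sequence of an element of `H(E,β)`. -/
def InHEb (β : ℕ → ℝ) (a : ℕ → ℂ) : Prop :=
  Summable (fun n => ‖a n‖ ^ 2 * (β n) ^ 2)

/-- The composition operator `C_φ` maps `H(E,β)` into itself with norm bound `C`: each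
`f ∈ H(E,β)` has `f ∘ φ` again representable in `H(E,β)` with `‖f ∘ φ‖ ≤ C ‖f‖`. -/
def CompBddBy (Λ β : ℕ → ℝ) (φ : ℂ → ℂ) (C : ℝ) : Prop :=
  ∀ a : ℕ → ℂ, InHEb β a →
    ∃ b : ℕ → ℂ, InHEb β b ∧
      (∀ z : ℂ, HasSum (fun n => b n * Complex.exp (-(Λ n : ℂ) * z))
        (∑' n, a n * Complex.exp (-(Λ n : ℂ) * φ z))) ∧
      ∑' n, ‖b n‖ ^ 2 * (β n) ^ 2 ≤ C ^ 2 * ∑' n, ‖a n‖ ^ 2 * (β n) ^ 2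

lemma re_neg_mul (t : ℝ) (z : ℂ) : (-(t:ℂ) * z).re = -t * z.re := by
  simp [Complex.mul_re]

lemma norm_exp_neg (t : ℝ) (z : ℂ) : ‖Complex.exp (-(t:ℂ) * z)‖ = Real.exp (-t * z.re) := by
  rw [Complex.norm_exp, re_neg_mul]

lemma exp_sq (r : ℝ) : Real.exp r ^ 2 = Real.exp (2 * r) := by
  rw [sq, ← Real.exp_add]; ring_nf

set_option maxHeartbeats 1000000 in
/-- Core summability: for every `t`, `Σ e^{Λ_k t}/β_k²` converges. -/
lemma sumS (Λ β : ℕ → ℝ) (hmono : StrictMono Λ)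
    (hL : IsBoundedUnder (· ≤ ·) atTop (fun n : ℕ => Real.log ((n : ℝ) + 1) / Λ n))
    (hβ : ∀ n, 0 < β n)
    (hE : Tendsto (fun n => Real.log (β n) / Λ n) atTop atTop)
    (hΛ0 : 0 < Λ 0) (t : ℝ) :
    Summable (fun k => Real.exp (Λ k * t) / (β k) ^ 2) := by
  obtain ⟨L, hLf⟩ := hL
  rw [eventually_map] at hLf
  set L' : ℝ := max L 1 with hL'
  have hL'1 : (1:ℝ) ≤ L' := le_max_right _ _
  have hLf' : ∀ᶠ n : ℕ in atTop, Real.log ((n:ℝ)+1) / Λ n ≤ L' :=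
    hLf.mono fun n h => le_trans h (le_max_left _ _)
  have hEf : ∀ᶠ n : ℕ in atTop, t / 2 + L' ≤ Real.log (β n) / Λ n :=
    hE.eventually_ge_atTop _
  have hbound : ∀ᶠ n : ℕ in atTop,
      Real.exp (Λ n * t) / (β n) ^ 2 ≤ 1 / ((n:ℝ)+1) ^ 2 := by
    filter_upwards [hLf', hEf] with n h1 h2
    have hΛn : 0 < Λ n := lt_of_lt_of_le hΛ0 (hmono.monotone (Nat.zero_le n))
    have hlog1 : Real.log ((n:ℝ)+1) ≤ L' * Λ n := by
      rw [div_le_iff₀ hΛn] at h1; linarith [h1]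
    have hlog2 : (t/2 + L') * Λ n ≤ Real.log (β n) := by
      rw [le_div_iff₀ hΛn] at h2; linarith [h2]
    have hn1 : (0:ℝ) < (n:ℝ)+1 := by positivity
    rw [div_le_div_iff₀ (pow_pos (hβ n) 2) (by positivity)]
    have e1 : ((n:ℝ)+1)^2 = Real.exp (2 * Real.log ((n:ℝ)+1)) := by
      rw [← exp_sq, Real.exp_log hn1]
    have e2 : (β n)^2 = Real.exp (2 * Real.log (β n)) := by
      rw [← exp_sq, Real.exp_log (hβ n)]
    rw [e1, e2, ← Real.exp_add, one_mul]
    apply Real.exp_le_exp.2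
    nlinarith [hlog1, hlog2]
  obtain ⟨N, hN⟩ := eventually_atTop.1 hbound
  rw [← summable_nat_add_iff N]
  apply Summable.of_nonneg_of_le (fun k => by positivity)
    (fun k => hN (k + N) (Nat.le_add_left _ _))
  have h2 : Summable (fun n : ℕ => 1 / ((n:ℝ)+1) ^ 2) := by
    have := (summable_nat_add_iff (f := fun n : ℕ => 1 / (n:ℝ) ^ 2) 1).2
      (Real.summable_one_div_nat_pow.2 one_lt_two)
    simpa using this
  exact (summable_nat_add_iff N).2 h2

noncomputable def S2fun (Λ β : ℕ → ℝ) (x : ℝ) : ℝ :=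
  ∑' k, Real.exp (Λ k * (-2 * x)) / (β k) ^ 2

section S2
variable (Λ β : ℕ → ℝ) (hmono : StrictMono Λ)
    (hL : IsBoundedUnder (· ≤ ·) atTop (fun n : ℕ => Real.log ((n : ℝ) + 1) / Λ n))
    (hβ : ∀ n, 0 < β n)
    (hE : Tendsto (fun n => Real.log (β n) / Λ n) atTop atTop)
    (hΛ0 : 0 < Λ 0)

include hmono hL hβ hE hΛ0

lemma S2sum (x : ℝ) : Summable (fun k => Real.exp (Λ k * (-2 * x)) / (β k) ^ 2) :=
  sumS Λ β hmono hL hβ hE hΛ0 (-2 * x)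

lemma S2pos (x : ℝ) : 0 < S2fun Λ β x :=
  Summable.tsum_pos (S2sum Λ β hmono hL hβ hE hΛ0 x) (fun i => by positivity) 0 (div_pos (Real.exp_pos _) (pow_pos (hβ 0) 2))

lemma S2shift {u x : ℝ} (hux : u ≤ x) :
    Real.exp (2 * Λ 0 * (x - u)) * S2fun Λ β x ≤ S2fun Λ β u := by
  rw [S2fun, S2fun, ← tsum_mul_left]
  refine Summable.tsum_le_tsum (fun k => ?_)
    ((S2sum Λ β hmono hL hβ hE hΛ0 x).mul_left _) (S2sum Λ β hmono hL hβ hE hΛ0 u)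
  rw [← mul_div_assoc, ← Real.exp_add]
  have hk : Λ 0 ≤ Λ k := hmono.monotone (Nat.zero_le k)
  gcongr
  nlinarith
end S2

/-- Cauchy–Schwarz for tsums of nonnegative sequences. -/
lemma tsum_CS (u v : ℕ → ℝ) (hu : ∀ n, 0 ≤ u n) (hv : ∀ n, 0 ≤ v n)
    (hu2 : Summable (fun n => u n ^ 2)) (hv2 : Summable (fun n => v n ^ 2)) :
    Summable (fun n => u n * v n) ∧
      ∑' n, u n * v n ≤ Real.sqrt (∑' n, u n ^ 2) * Real.sqrt (∑' n, v n ^ 2) := by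
  have hsum : Summable (fun n => u n * v n) := by
    apply Summable.of_nonneg_of_le (fun n => mul_nonneg (hu n) (hv n))
      (fun n => ?_) ((hu2.add hv2).div_const 2)
    show u n * v n ≤ (u n ^ 2 + v n ^ 2) / 2
    nlinarith [two_mul_le_add_sq (u n) (v n)]
  refine ⟨hsum, ?_⟩
  rw [← Real.sqrt_mul (tsum_nonneg (fun n => sq_nonneg _))]
  apply Summable.tsum_le_of_sum_le hsum
  intro s
  rw [Real.le_sqrt (Finset.sum_nonneg (fun i _ => mul_nonneg (hu i) (hv i)))]
  calc (∑ i ∈ s, u i * v i) ^ 2 ≤ (∑ i ∈ s, u i ^ 2) * ∑ i ∈ s, v i ^ 2 :=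
        Finset.sum_mul_sq_le_sq_mul_sq s u v
    _ ≤ (∑' n, u n ^ 2) * ∑' n, v n ^ 2 :=
        mul_le_mul (Summable.sum_le_tsum s (fun i _ => sq_nonneg _) hu2)
          (Summable.sum_le_tsum s (fun i _ => sq_nonneg _) hv2)
          (Finset.sum_nonneg (fun i _ => sq_nonneg _))
          (tsum_nonneg (fun n => sq_nonneg _))
  exact mul_nonneg (tsum_nonneg fun n => sq_nonneg _) (tsum_nonneg fun n => sq_nonneg _)

section main
variable {Λ β : ℕ → ℝ} {φ : ℂ → ℂ}
variable (hmono : StrictMono Λ)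
    (hL : IsBoundedUnder (· ≤ ·) atTop (fun n : ℕ => Real.log ((n : ℝ) + 1) / Λ n))
    (hβ : ∀ n, 0 < β n)
    (hE : Tendsto (fun n => Real.log (β n) / Λ n) atTop atTop)
    (hΛ0 : 0 < Λ 0)

include hmono hL hβ hE hΛ0

/-- Elements of `H(E,β)` define everywhere-convergent Dirichlet series. -/
lemma summable_series (a : ℕ → ℂ) (ha : InHEb β a) (w : ℂ) :
    Summable (fun n => a n * Complex.exp (-(Λ n : ℂ) * w)) := by
  apply Summable.of_norm
  have hv2 : Summable (fun n => (Real.exp (-(Λ n) * w.re) / β n) ^ 2) := by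
    have := S2sum Λ β hmono hL hβ hE hΛ0 w.re
    apply this.congr
    intro n
    rw [div_pow, exp_sq]
    congr 2
    ring
  have hu2 : Summable (fun n => (‖a n‖ * β n) ^ 2) := by
    apply ha.congr
    intro n
    rw [mul_pow]
  have key := (tsum_CS (fun n => ‖a n‖ * β n) (fun n => Real.exp (-(Λ n) * w.re) / β n)
    (fun n => mul_nonneg (norm_nonneg _) (hβ n).le)
    (fun n => div_nonneg (Real.exp_pos _).le (hβ n).le) hu2 hv2).1
  apply key.congr
  intro n
  rw [norm_mul, norm_exp_neg]
  field_simp [(hβ n).ne']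

/-- The reproducing-kernel bound: `S2((φ w).re) ≤ C² S2(w.re)`. -/
lemma kernel_bound {C : ℝ} (hC0 : 0 ≤ C) (hC : CompBddBy Λ β φ C) (w : ℂ) :
    S2fun Λ β (φ w).re ≤ C ^ 2 * S2fun Λ β w.re := by
  classical
  set u : ℂ := φ w with hu
  set a : ℕ → ℂ := fun k => Complex.exp (-(Λ k : ℂ) * (starRingEnd ℂ) u) * ((1 / (β k) ^ 2 : ℝ) : ℂ)
    with ha
  have hnorm : ∀ k, ‖a k‖ = Real.exp (-(Λ k) * u.re) / (β k) ^ 2 := by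
    intro k
    rw [ha]
    simp only [norm_mul, norm_exp_neg, Complex.norm_real, Real.norm_eq_abs]
    rw [Complex.conj_re, abs_of_pos (div_pos one_pos (pow_pos (hβ k) 2))]
    field_simp
  have haEq : (fun n => ‖a n‖ ^ 2 * (β n) ^ 2)
      = fun k => Real.exp (Λ k * (-2 * u.re)) / (β k) ^ 2 := by
    funext k
    have hb : (β k : ℝ) ≠ 0 := (hβ k).ne'
    rw [hnorm k, div_pow, exp_sq]
    have harg : 2 * (-Λ k * u.re) = Λ k * (-2 * u.re) := by ring
    rw [harg]
    field_simp
  have haH : InHEb β a := by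
    unfold InHEb
    rw [haEq]
    exact S2sum Λ β hmono hL hβ hE hΛ0 u.re
  obtain ⟨bb, hbbH, hbbS, hbbN⟩ := hC a haH
  -- the value of the transformed series at w is S2((φ w).re)
  have hval : (∑' n, a n * Complex.exp (-(Λ n : ℂ) * φ w)) = ((S2fun Λ β u.re : ℝ) : ℂ) := by
    rw [S2fun, Complex.ofReal_tsum]
    congr 1
    funext n
    rw [ha]
    have : Complex.exp (-(Λ n:ℂ) * (starRingEnd ℂ) u) * ((1 / (β n)^2 : ℝ):ℂ)
        * Complex.exp (-(Λ n:ℂ) * u)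
        = Complex.exp (-(Λ n:ℂ) * ((starRingEnd ℂ) u + u)) * ((1 / (β n)^2 : ℝ):ℂ) := by
      rw [mul_add, Complex.exp_add]; ring
    rw [← hu, this]
    have h2 : (starRingEnd ℂ) u + u = ((2 * u.re : ℝ) : ℂ) := by
      rw [add_comm]; exact Complex.add_conj u
    rw [h2]
    have h3 : -(Λ n:ℂ) * ((2 * u.re : ℝ) : ℂ) = ((Λ n * (-2 * u.re) : ℝ) : ℂ) := by
      push_cast; ring
    rw [h3, ← Complex.ofReal_exp]
    push_cast
    ring
  have hsumval : HasSum (fun n => bb n * Complex.exp (-(Λ n : ℂ) * w))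
      ((S2fun Λ β u.re : ℝ) : ℂ) := hval ▸ hbbS w
  -- norms of the terms
  have hnorms : (fun n => ‖bb n * Complex.exp (-(Λ n : ℂ) * w)‖)
      = fun n => (‖bb n‖ * β n) * (Real.exp (-(Λ n) * w.re) / β n) := by
    funext n
    rw [norm_mul, norm_exp_neg]
    field_simp [(hβ n).ne']
  have hu2 : Summable (fun n => (‖bb n‖ * β n) ^ 2) := by
    apply hbbH.congr; intro n; rw [mul_pow]
  have hv2 : Summable (fun n => (Real.exp (-(Λ n) * w.re) / β n) ^ 2) := by
    have := S2sum Λ β hmono hL hβ hE hΛ0 w.re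
    apply this.congr; intro n; rw [div_pow, exp_sq]; congr 2; ring
  obtain ⟨hCSsum, hCSle⟩ := tsum_CS (fun n => ‖bb n‖ * β n)
    (fun n => Real.exp (-(Λ n) * w.re) / β n)
    (fun n => mul_nonneg (norm_nonneg _) (hβ n).le)
    (fun n => div_nonneg (Real.exp_pos _).le (hβ n).le) hu2 hv2
  have hnormsum : Summable (fun n => ‖bb n * Complex.exp (-(Λ n : ℂ) * w)‖) := by
    rw [hnorms]; exact hCSsum
  have hstep1 : S2fun Λ β u.re ≤ ∑' n, (‖bb n‖ * β n) * (Real.exp (-(Λ n) * w.re) / β n) := by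
    have h1 : S2fun Λ β u.re = ‖((S2fun Λ β u.re : ℝ) : ℂ)‖ := by
      rw [Complex.norm_real, Real.norm_eq_abs,
        abs_of_pos (S2pos Λ β hmono hL hβ hE hΛ0 u.re)]
    rw [h1, ← hsumval.tsum_eq, ← hnorms]
    exact norm_tsum_le_tsum_norm hnormsum
  -- identify the two sums of squares
  have hsq1 : ∑' n, (‖bb n‖ * β n) ^ 2 ≤ C ^ 2 * S2fun Λ β u.re := by
    calc ∑' n, (‖bb n‖ * β n) ^ 2 = ∑' n, ‖bb n‖ ^ 2 * (β n) ^ 2 := by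
          congr 1; funext n; rw [mul_pow]
      _ ≤ C ^ 2 * ∑' n, ‖a n‖ ^ 2 * (β n) ^ 2 := hbbN
      _ = C ^ 2 * S2fun Λ β u.re := by rw [S2fun]; congr 1; rw [haEq]
  have hsq2 : ∑' n, (Real.exp (-(Λ n) * w.re) / β n) ^ 2 = S2fun Λ β w.re := by
    rw [S2fun]; congr 1; funext n; rw [div_pow, exp_sq]; congr 2; ring
  -- put it together
  set P : ℝ := Real.sqrt (S2fun Λ β u.re) with hP
  set Q : ℝ := Real.sqrt (S2fun Λ β w.re) with hQ
  have hPpos : 0 < P := Real.sqrt_pos.2 (S2pos Λ β hmono hL hβ hE hΛ0 u.re)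
  have hPsq : P ^ 2 = S2fun Λ β u.re := Real.sq_sqrt (S2pos Λ β hmono hL hβ hE hΛ0 u.re).le
  have hQsq : Q ^ 2 = S2fun Λ β w.re := Real.sq_sqrt (S2pos Λ β hmono hL hβ hE hΛ0 w.re).le
  have hfinal : P ^ 2 ≤ (C * Q) * P := by
    rw [hPsq]
    calc S2fun Λ β u.re ≤ ∑' n, (‖bb n‖ * β n) * (Real.exp (-(Λ n) * w.re) / β n) := hstep1
      _ ≤ Real.sqrt (∑' n, (‖bb n‖ * β n) ^ 2)
            * Real.sqrt (∑' n, (Real.exp (-(Λ n) * w.re) / β n) ^ 2) := hCSle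
      _ ≤ Real.sqrt (C ^ 2 * S2fun Λ β u.re) * Q := by
          rw [hQ, hsq2]
          exact mul_le_mul_of_nonneg_right (Real.sqrt_le_sqrt hsq1) (Real.sqrt_nonneg _)
      _ = (C * Q) * P := by
          rw [Real.sqrt_mul (by positivity), Real.sqrt_sq hC0, hP]
          ring
  have hPle : P ≤ C * Q := by
    have h := hfinal
    rw [sq] at h
    exact le_of_mul_le_mul_right h hPpos
  calc S2fun Λ β u.re = P ^ 2 := hPsq.symm
    _ ≤ (C * Q) ^ 2 := by
        have h0 : 0 ≤ P := hPpos.le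
        nlinarith [hPle]
    _ = C ^ 2 * S2fun Λ β w.re := by rw [mul_pow, hQsq]


lemma Cpos {C : ℝ} (hC0 : 0 ≤ C) (hC : CompBddBy Λ β φ C) : 0 < C := by
  rcases hC0.lt_or_eq with h | h
  · exact h
  · exfalso
    have hk := kernel_bound hmono hL hβ hE hΛ0 hC0 hC 0
    rw [← h] at hk
    simp only [ne_eq, OfNat.ofNat_ne_zero, not_false_eq_true, zero_pow, zero_mul] at hk
    exact absurd hk (not_le.2 (S2pos Λ β hmono hL hβ hE hΛ0 _))

lemma phi_affine (hφ : Differentiable ℂ φ) {C : ℝ} (hC0 : 0 ≤ C) (hC : CompBddBy Λ β φ C) :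
    ∀ z : ℂ, φ z = z + φ 0 := by
  have hCpos : 0 < C := Cpos hmono hL hβ hE hΛ0 hC0 hC
  set c0 : ℝ := max 0 (Real.log C) / Λ 0 with hc0def
  have hc0 : 0 ≤ c0 := div_nonneg (le_max_left _ _) hΛ0.le
  have hre : ∀ z : ℂ, z.re - (φ z).re ≤ c0 := by
    intro z
    by_cases h : (φ z).re < z.re
    · have hk := kernel_bound hmono hL hβ hE hΛ0 hC0 hC z
      have hs := S2shift Λ β hmono hL hβ hE hΛ0 h.le
      have hS2z := S2pos Λ β hmono hL hβ hE hΛ0 z.re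
      have h1 : Real.exp (2 * Λ 0 * (z.re - (φ z).re)) ≤ C ^ 2 :=
        le_of_mul_le_mul_right (hs.trans hk) hS2z
      have h2 : 2 * Λ 0 * (z.re - (φ z).re) ≤ Real.log (C ^ 2) := by
        rw [← Real.log_exp (2 * Λ 0 * (z.re - (φ z).re))]
        exact Real.log_le_log (Real.exp_pos _) h1
      rw [Real.log_pow] at h2
      have h3 : z.re - (φ z).re ≤ Real.log C / Λ 0 := by
        rw [le_div_iff₀ hΛ0]
        push_cast at h2
        nlinarith
      refine h3.trans ?_
      rw [hc0def]
      gcongr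
      exact le_max_right _ _
    · push_neg at h
      linarith
  have hg : Differentiable ℂ (fun z => Complex.exp (z - φ z)) := (differentiable_id.sub hφ).cexp
  have hbd : Bornology.IsBounded (Set.range fun z => Complex.exp (z - φ z)) := by
    rw [Metric.isBounded_iff_subset_closedBall 0]
    refine ⟨Real.exp c0, ?_⟩
    rintro x ⟨z, rfl⟩
    rw [Metric.mem_closedBall, dist_zero_right, Complex.norm_exp,
      Complex.sub_re]
    exact Real.exp_le_exp.2 (hre z)
  have hconst : ∀ z, Complex.exp (z - φ z) = Complex.exp (0 - φ 0) := fun z =>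
    hg.apply_eq_apply_of_bounded hbd z 0
  have hderiv : ∀ z, deriv φ z = 1 := by
    intro z
    have hdφ : HasDerivAt φ (deriv φ z) z := (hφ z).hasDerivAt
    have h1 : HasDerivAt (fun z => z - φ z) (1 - deriv φ z) z := (hasDerivAt_id z).sub hdφ
    have h2 : HasDerivAt (fun z => Complex.exp (z - φ z))
        (Complex.exp (z - φ z) * (1 - deriv φ z)) z := h1.cexp
    have h4 : (fun z => Complex.exp (z - φ z)) = fun _ : ℂ => Complex.exp (0 - φ 0) :=
      funext hconst
    rw [h4] at h2
    have h5 := h2.unique (hasDerivAt_const _ _)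
    rcases mul_eq_zero.1 h5 with h | h
    · exact absurd h (Complex.exp_ne_zero _)
    · have := sub_eq_zero.1 h
      linear_combination -this
  have hkonst : ∀ z, φ z - z = φ 0 - 0 := by
    intro z
    refine is_const_of_deriv_eq_zero (𝕜 := ℂ) (hφ.sub differentiable_id) (fun x => ?_) z 0
    have h7 : HasDerivAt (fun z => φ z - z) (deriv φ x - 1) x :=
      ((hφ x).hasDerivAt).sub (hasDerivAt_id x)
    rw [hderiv x, sub_self] at h7
    exact h7.deriv
  intro z
  have := hkonst z
  linear_combination this

lemma re_b_nonneg {C : ℝ} (hC0 : 0 ≤ C) (hC : CompBddBy Λ β φ C) (b : ℂ)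
    (hb : ∀ z : ℂ, φ z = z + b) (htop : Tendsto Λ atTop atTop) : 0 ≤ b.re := by
  by_contra hneg
  push_neg at hneg
  set δ : ℝ := -b.re with hδ
  have hδpos : 0 < δ := by rw [hδ]; linarith
  have hbre : b.re = -δ := by rw [hδ]; ring
  have hCpos : 0 < C := Cpos hmono hL hβ hE hΛ0 hC0 hC
  have hker : ∀ x : ℝ, S2fun Λ β (x + b.re) ≤ C ^ 2 * S2fun Λ β x := by
    intro x
    have hk := kernel_bound hmono hL hβ hE hΛ0 hC0 hC (x : ℂ)
    rw [hb] at hk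
    simpa using hk
  have iter : ∀ m : ℕ, S2fun Λ β (-(m : ℝ) * δ) ≤ (C ^ 2) ^ m * S2fun Λ β 0 := by
    intro m
    induction m with
    | zero => simp
    | succ m ih =>
      have h1 := hker (-(m : ℝ) * δ)
      have harg : (-(m : ℝ) * δ + b.re) = -((m + 1 : ℕ) : ℝ) * δ := by
        rw [hbre]; push_cast; ring
      rw [harg] at h1
      calc S2fun Λ β (-((m + 1 : ℕ) : ℝ) * δ) ≤ C ^ 2 * S2fun Λ β (-(m : ℝ) * δ) := h1
        _ ≤ C ^ 2 * ((C ^ 2) ^ m * S2fun Λ β 0) :=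
            mul_le_mul_of_nonneg_left ih (by positivity)
        _ = (C ^ 2) ^ (m + 1) * S2fun Λ β 0 := by ring
  obtain ⟨N, hN⟩ := (htop.eventually_ge_atTop ((Real.log (C ^ 2) + 1) / (2 * δ))).exists
  have hrlt : C ^ 2 < Real.exp (2 * Λ N * δ) := by
    have h1 : Real.log (C ^ 2) + 1 ≤ 2 * Λ N * δ := by
      rw [div_le_iff₀ (by positivity)] at hN
      nlinarith
    calc C ^ 2 = Real.exp (Real.log (C ^ 2)) := (Real.exp_log (by positivity)).symm
      _ < Real.exp (2 * Λ N * δ) := Real.exp_lt_exp.2 (by linarith)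
  have hlow : ∀ m : ℕ, Real.exp (2 * Λ N * δ) ^ m / (β N) ^ 2 ≤ S2fun Λ β (-(m : ℝ) * δ) := by
    intro m
    have h1 := Summable.le_tsum (S2sum Λ β hmono hL hβ hE hΛ0 (-(m : ℝ) * δ)) N
      (fun i _ => by positivity)
    have h2 : Real.exp (Λ N * (-2 * (-(m : ℝ) * δ))) = Real.exp (2 * Λ N * δ) ^ m := by
      rw [← Real.exp_nat_mul]
      congr 1
      ring
    rw [S2fun, ← h2]
    exact h1
  set r : ℝ := Real.exp (2 * Λ N * δ) / C ^ 2 with hr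
  have hr1 : 1 < r := by
    rw [hr, lt_div_iff₀ (by positivity)]
    linarith
  obtain ⟨m, hm⟩ := pow_unbounded_of_one_lt ((β N) ^ 2 * S2fun Λ β 0) hr1
  have hcontr : r ^ m ≤ (β N) ^ 2 * S2fun Λ β 0 := by
    have h1 := (hlow m).trans (iter m)
    rw [hr, div_pow, div_le_iff₀ (by positivity)]
    rw [div_le_iff₀ (pow_pos (hβ N) 2)] at h1
    calc Real.exp (2 * Λ N * δ) ^ m ≤ (C ^ 2) ^ m * S2fun Λ β 0 * β N ^ 2 := h1
      _ = β N ^ 2 * S2fun Λ β 0 * (C ^ 2) ^ m := by ring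
  exact absurd hm (not_lt.2 hcontr)

/-- Asymptotics of the kernel: `S2(x) e^{2Λ₀x} → 1/β₀²` as `x → ∞`. -/
lemma S2_tendsto : Tendsto (fun x : ℝ => S2fun Λ β x * Real.exp (2 * Λ 0 * x))
    atTop (nhds (1 / (β 0) ^ 2)) := by
  set D : ℝ := Λ 1 - Λ 0 with hD
  have hDpos : 0 < D := sub_pos.2 (hmono Nat.zero_lt_one)
  set g : ℝ → ℕ → ℝ := fun x k => Real.exp (-(2 * (Λ k - Λ 0)) * x) / (β k) ^ 2 with hg
  have hgsum : ∀ x, Summable (g x) := by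
    intro x
    apply ((S2sum Λ β hmono hL hβ hE hΛ0 x).mul_left (Real.exp (2 * Λ 0 * x))).congr
    intro k
    rw [hg, ← mul_div_assoc, ← Real.exp_add]
    congr 2
    ring
  have hTx : ∀ x, S2fun Λ β x * Real.exp (2 * Λ 0 * x) = 1 / (β 0) ^ 2 + ∑' k, g x (k + 1) := by
    intro x
    have h1 : S2fun Λ β x * Real.exp (2 * Λ 0 * x) = ∑' k, g x k := by
      rw [S2fun, ← tsum_mul_right]
      congr 1
      funext k
      rw [hg, div_mul_eq_mul_div, ← Real.exp_add]
      congr 2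
      ring
    rw [h1, Summable.tsum_eq_zero_add (hgsum x)]
    congr 1
    rw [hg]
    simp
  set Kc : ℕ → ℝ := fun k =>
    Real.exp (-(2 * (Λ (k + 1) - Λ 0))) * Real.exp (2 * D) / (β (k + 1)) ^ 2 with hKc
  have hKcsum : Summable Kc := by
    apply (((summable_nat_add_iff 1).2 (S2sum Λ β hmono hL hβ hE hΛ0 1)).mul_left
      (Real.exp (2 * Λ 0 + 2 * D))).congr
    intro k
    show Real.exp (2 * Λ 0 + 2 * D) * (Real.exp (Λ (k + 1) * (-2 * 1)) / β (k + 1) ^ 2)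
        = Real.exp (-(2 * (Λ (k + 1) - Λ 0))) * Real.exp (2 * D) / β (k + 1) ^ 2
    rw [← mul_div_assoc, ← Real.exp_add, ← Real.exp_add]
    congr 2
    ring
  have htb : ∀ x : ℝ, 1 ≤ x → ∑' k, g x (k + 1) ≤ (∑' k, Kc k) * Real.exp (-(2 * D) * x) := by
    intro x hx
    rw [← tsum_mul_right]
    refine Summable.tsum_le_tsum (fun k => ?_) ((summable_nat_add_iff 1).2 (hgsum x)) (hKcsum.mul_right _)
    show Real.exp (-(2 * (Λ (k + 1) - Λ 0)) * x) / β (k + 1) ^ 2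
        ≤ (Real.exp (-(2 * (Λ (k + 1) - Λ 0))) * Real.exp (2 * D) / β (k + 1) ^ 2)
          * Real.exp (-(2 * D) * x)
    rw [div_mul_eq_mul_div]
    gcongr ?_ / _
    rw [mul_assoc, ← Real.exp_add, ← Real.exp_add]
    apply Real.exp_le_exp.2
    have hk1 : D ≤ Λ (k + 1) - Λ 0 := by
      have := hmono.monotone (Nat.one_le_iff_ne_zero.2 (Nat.succ_ne_zero k))
      rw [hD]; linarith
    nlinarith
  have htail0 : Tendsto (fun x : ℝ => ∑' k, g x (k + 1)) atTop (nhds 0) := by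
    apply squeeze_zero' (g := fun x => (∑' k, Kc k) * Real.exp (-(2 * D) * x))
    · exact Eventually.of_forall fun x => tsum_nonneg fun k => by positivity
    · filter_upwards [eventually_ge_atTop (1 : ℝ)] with x hx
      exact htb x hx
    · have hlin : Tendsto (fun x : ℝ => -(2 * D) * x) atTop atBot :=
        (tendsto_const_mul_atBot_of_neg (by linarith)).2 tendsto_id
      have := (Real.tendsto_exp_atBot.comp hlin).const_mul (∑' k, Kc k)
      simpa using this
  have := tendsto_const_nhds.add htail0 (f := fun _ : ℝ => 1 / (β 0) ^ 2) (x := atTop)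
  rw [add_zero] at this
  exact this.congr fun x => (hTx x).symm


/-- If `φ(z) = z + b` with `Re b ≥ 0` then `C_φ` is bounded by `e^{-Λ₀ Re b}`. -/
lemma mem_bound (b : ℂ) (hbre : 0 ≤ b.re) (hφb : ∀ z : ℂ, φ z = z + b) :
    CompBddBy Λ β φ (Real.exp (-(Λ 0) * b.re)) := by
  intro a ha
  have hIn : InHEb β (fun n => a n * Complex.exp (-(Λ n : ℂ) * b)) := by
    unfold InHEb at ha ⊢
    apply Summable.of_nonneg_of_le (fun n => by positivity) (fun n => ?_) ha
    rw [norm_mul, norm_exp_neg, mul_pow]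
    have hΛn : 0 < Λ n := lt_of_lt_of_le hΛ0 (hmono.monotone (Nat.zero_le n))
    have h1 : Real.exp (-(Λ n) * b.re) ^ 2 ≤ 1 := by
      have he : Real.exp (-(Λ n) * b.re) ≤ 1 := Real.exp_le_one_iff.2 (by nlinarith)
      nlinarith [Real.exp_pos (-(Λ n) * b.re)]
    nlinarith [mul_nonneg (sq_nonneg ‖a n‖) (sq_nonneg (β n)),
      sq_nonneg (‖a n‖ * β n), Real.exp_pos (-(Λ n) * b.re)]
  refine ⟨fun n => a n * Complex.exp (-(Λ n : ℂ) * b), hIn, ?_, ?_⟩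
  · intro z
    have hsum := summable_series hmono hL hβ hE hΛ0 a ha (z + b)
    have heq : (fun n => a n * Complex.exp (-(Λ n : ℂ) * b) * Complex.exp (-(Λ n : ℂ) * z))
        = fun n => a n * Complex.exp (-(Λ n : ℂ) * (z + b)) := by
      funext n
      rw [mul_assoc, ← Complex.exp_add]
      congr 2
      ring
    rw [heq]
    have hφz : (∑' n, a n * Complex.exp (-(Λ n : ℂ) * φ z))
        = ∑' n, a n * Complex.exp (-(Λ n : ℂ) * (z + b)) := by rw [hφb z]
    rw [hφz]
    exact hsum.hasSum
  · have hterm : ∀ n, ‖a n * Complex.exp (-(Λ n : ℂ) * b)‖ ^ 2 * (β n) ^ 2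
        ≤ Real.exp (-(Λ 0) * b.re) ^ 2 * (‖a n‖ ^ 2 * (β n) ^ 2) := by
      intro n
      rw [norm_mul, norm_exp_neg, mul_pow]
      have hΛn : Λ 0 ≤ Λ n := hmono.monotone (Nat.zero_le n)
      have he : Real.exp (-(Λ n) * b.re) ≤ Real.exp (-(Λ 0) * b.re) :=
        Real.exp_le_exp.2 (by nlinarith)
      have he2 : Real.exp (-(Λ n) * b.re) ^ 2 ≤ Real.exp (-(Λ 0) * b.re) ^ 2 := by
        nlinarith [Real.exp_pos (-(Λ n) * b.re)]
      nlinarith [sq_nonneg ‖a n‖, sq_nonneg (β n),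
        mul_nonneg (sq_nonneg ‖a n‖) (sq_nonneg (β n))]
    calc ∑' n, ‖a n * Complex.exp (-(Λ n : ℂ) * b)‖ ^ 2 * (β n) ^ 2
        ≤ ∑' n, Real.exp (-(Λ 0) * b.re) ^ 2 * (‖a n‖ ^ 2 * (β n) ^ 2) :=
          Summable.tsum_le_tsum hterm hIn (ha.mul_left _)
      _ = Real.exp (-(Λ 0) * b.re) ^ 2 * ∑' n, ‖a n‖ ^ 2 * (β n) ^ 2 := tsum_mul_left

/-- Any bound constant is at least `e^{-Λ₀ Re b}`. -/
lemma lower_bound (b : ℂ) (hφb : ∀ z : ℂ, φ z = z + b)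
    {C : ℝ} (hC0 : 0 ≤ C) (hC : CompBddBy Λ β φ C) : Real.exp (-(Λ 0) * b.re) ≤ C := by
  have hker : ∀ x : ℝ, S2fun Λ β (x + b.re) ≤ C ^ 2 * S2fun Λ β x := by
    intro x
    have hk := kernel_bound hmono hL hβ hE hΛ0 hC0 hC (x : ℂ)
    rw [hφb] at hk
    simpa using hk
  have hA := S2_tendsto hmono hL hβ hE hΛ0
  have hB : Tendsto (fun x : ℝ => S2fun Λ β (x + b.re) * Real.exp (2 * Λ 0 * x)) atTop
      (nhds (1 / (β 0) ^ 2 * Real.exp (-(2 * Λ 0) * b.re))) := by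
    have h1 := (hA.comp (tendsto_atTop_add_const_right atTop b.re tendsto_id)).mul_const
      (Real.exp (-(2 * Λ 0) * b.re))
    apply h1.congr
    intro x
    show S2fun Λ β (x + b.re) * Real.exp (2 * Λ 0 * (x + b.re)) * Real.exp (-(2 * Λ 0) * b.re)
        = S2fun Λ β (x + b.re) * Real.exp (2 * Λ 0 * x)
    rw [mul_assoc, ← Real.exp_add]
    congr 2
    ring
  have hCA : Tendsto (fun x : ℝ => C ^ 2 * (S2fun Λ β x * Real.exp (2 * Λ 0 * x))) atTop
      (nhds (C ^ 2 * (1 / (β 0) ^ 2))) := hA.const_mul _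
  have hle : 1 / (β 0) ^ 2 * Real.exp (-(2 * Λ 0) * b.re) ≤ C ^ 2 * (1 / (β 0) ^ 2) := by
    refine le_of_tendsto_of_tendsto' hB hCA (fun x => ?_)
    have := mul_le_mul_of_nonneg_right (hker x) (Real.exp_pos (2 * Λ 0 * x)).le
    calc S2fun Λ β (x + b.re) * Real.exp (2 * Λ 0 * x)
        ≤ C ^ 2 * S2fun Λ β x * Real.exp (2 * Λ 0 * x) := this
      _ = C ^ 2 * (S2fun Λ β x * Real.exp (2 * Λ 0 * x)) := by ring
  have hβ0 : (0:ℝ) < (β 0) ^ 2 := pow_pos (hβ 0) 2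
  have hE2 : Real.exp (-(2 * Λ 0 * b.re)) ≤ C ^ 2 := by
    have h2 := mul_le_mul_of_nonneg_right hle hβ0.le
    field_simp at h2
    rw [mul_div_cancel_left₀ _ (hβ 0).ne', mul_div_cancel_left₀ _ (hβ 0).ne'] at h2
    linarith
  have hsq : Real.exp (-(Λ 0) * b.re) ^ 2 = Real.exp (-(2 * Λ 0 * b.re)) := by
    rw [exp_sq]; congr 1; ring
  nlinarith [Real.exp_pos (-(Λ 0) * b.re)]


end main
/-- Criterion for `λ_1 > 0`: `C_φ` is bounded on `H(E,β)` iff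
`φ(z) = z + b` with `Re b ≥ 0`; in that case the operator norm (least bound constant)
equals `e^{-λ_1 Re b}`. -/

theorem stmt_14 (Λ : ℕ → ℝ) (β : ℕ → ℝ) (φ : ℂ → ℂ)
    (hmono : StrictMono Λ) (hpos : ∀ n, 0 ≤ Λ n)
    (htop : Tendsto Λ atTop atTop)
    (hL : IsBoundedUnder (· ≤ ·) atTop (fun n : ℕ => Real.log ((n : ℝ) + 1) / Λ n))
    (hβ : ∀ n, 0 < β n)
    (hE : Tendsto (fun n => Real.log (β n) / Λ n) atTop atTop)
    (hΛ0 : 0 < Λ 0)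
    (hφ : Differentiable ℂ φ) :
    ((∃ C : ℝ, 0 ≤ C ∧ CompBddBy Λ β φ C) ↔
      ∃ b : ℂ, 0 ≤ b.re ∧ ∀ z : ℂ, φ z = z + b) ∧
    (∀ b : ℂ, 0 ≤ b.re → (∀ z : ℂ, φ z = z + b) →
      sInf {C : ℝ | 0 ≤ C ∧ CompBddBy Λ β φ C} = Real.exp (-(Λ 0) * b.re)) := by
  constructor
  · constructor
    · rintro ⟨C, hC0, hC⟩
      have haff := phi_affine hmono hL hβ hE hΛ0 hφ hC0 hC
      exact ⟨φ 0, re_b_nonneg hmono hL hβ hE hΛ0 hC0 hC (φ 0) haff htop, haff⟩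
    · rintro ⟨b, hbre, hφb⟩
      exact ⟨Real.exp (-(Λ 0) * b.re), (Real.exp_pos _).le,
        mem_bound hmono hL hβ hE hΛ0 b hbre hφb⟩
  · intro b hbre hφb
    have hmem : Real.exp (-(Λ 0) * b.re) ∈ {C : ℝ | 0 ≤ C ∧ CompBddBy Λ β φ C} :=
      ⟨(Real.exp_pos _).le, mem_bound hmono hL hβ hE hΛ0 b hbre hφb⟩
    have hlb : ∀ C ∈ {C : ℝ | 0 ≤ C ∧ CompBddBy Λ β φ C}, Real.exp (-(Λ 0) * b.re) ≤ C :=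
      fun C hCmem => lower_bound hmono hL hβ hE hΛ0 b hφb hCmem.1 hCmem.2
    exact le_antisymm (csInf_le ⟨_, hlb⟩ hmem) (le_csInf ⟨_, hmem⟩ hlb)
end

section
/- Assume condition (E) with λ_1 = 0 and suppose C_φ is bounded on H(E,β) for an entire φ not of the form z + b. If g(z) = M^{-1} e^{-λ_2 φ(z)} admits a Dirichlet series expansion g(z) = c_1 + c_2 e^{-λ_2 z} + c_3 e^{-λ_3 z} + ... and satisfies |g(z)| < e^{-λ_2 Re(z)} for all z with Re(z) < 0, then c_n = 0 for all n > 2; hence e^{-λ_2 φ(z)} = a_1 + a_2 e^{-λ_2 z} for some constants a_1, a_2 ∈ ℂ. -/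
open Filter Complex

private lemma sum_aux (Λ : ℕ → ℝ) (β : ℕ → ℝ) (c : ℕ → ℂ) (B L : ℝ)
    (hB : ∀ k, ‖c k‖ * β k ≤ B)
    (hβ : ∀ n, 0 < β n)
    (hLa : ∀ᶠ n : ℕ in Filter.atTop, Real.log ((n:ℝ)+1) / Λ n ≤ L)
    (hΛpos : ∀ᶠ n : ℕ in Filter.atTop, 0 < Λ n)
    (hE : Filter.Tendsto (fun n => Real.log (β n) / Λ n) Filter.atTop Filter.atTop) (σ : ℝ) :
    Summable (fun k => ‖c k‖ * Real.exp (-(Λ k) * σ)) := by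
  have hg : Summable (fun n : ℕ => (((n:ℝ)+1)^2)⁻¹) := by
    have := (summable_nat_add_iff (f := fun n : ℕ => ((n:ℝ)^2)⁻¹) 1).2
      (by simpa using Real.summable_one_div_nat_pow.2 (le_refl 2))
    simpa [add_comm] using this
  apply summable_of_isBigO_nat hg
  apply Asymptotics.IsBigO.of_bound B
  filter_upwards [hLa, hΛpos, hE.eventually_ge_atTop (2*L - σ)] with n h1 h2 h3
  have hlog : Real.log ((n:ℝ)+1) ≤ L * Λ n := by
    have := (div_le_iff₀ h2).mp h1; linarith
  have hlogβ : (2*L - σ) * Λ n ≤ Real.log (β n) := by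
    have := (le_div_iff₀ h2).mp h3; linarith
  have hc : ‖c n‖ ≤ B / β n := by
    rw [le_div_iff₀ (hβ n)]; exact hB n
  have hBnn : 0 ≤ B := le_trans (mul_nonneg (norm_nonneg _) (hβ 0).le) (hB 0)
  have step1 : ‖c n‖ * Real.exp (-(Λ n) * σ) ≤ B * Real.exp (-(Λ n) * σ - Real.log (β n)) := by
    have h4 : ‖c n‖ * Real.exp (-(Λ n) * σ) ≤ (B / β n) * Real.exp (-(Λ n) * σ) :=
      mul_le_mul_of_nonneg_right hc (Real.exp_pos _).le
    have h5 : (B / β n) * Real.exp (-(Λ n) * σ) = B * Real.exp (-(Λ n) * σ - Real.log (β n)) := by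
      rw [Real.exp_sub, Real.exp_log (hβ n)]; ring
    exact h4.trans_eq h5
  have step2 : Real.exp (-(Λ n) * σ - Real.log (β n)) ≤ Real.exp (-(2:ℝ) * Real.log ((n:ℝ)+1)) := by
    apply Real.exp_le_exp.2
    nlinarith [h2.le]
  have step3 : Real.exp (-(2:ℝ) * Real.log ((n:ℝ)+1)) = (((n:ℝ)+1)^2)⁻¹ := by
    have hn1 : (0:ℝ) < (n:ℝ)+1 := by positivity
    rw [show (-(2:ℝ) * Real.log ((n:ℝ)+1)) = Real.log ((((n:ℝ)+1)^2)⁻¹) by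
      rw [Real.log_inv, Real.log_pow]; push_cast; ring]
    exact Real.exp_log (by positivity)
  rw [Real.norm_eq_abs, Real.norm_eq_abs, _root_.abs_of_nonneg (by positivity),
    _root_.abs_of_nonneg (by positivity)]
  calc ‖c n‖ * Real.exp (-(Λ n) * σ) ≤ B * Real.exp (-(Λ n) * σ - Real.log (β n)) := step1
    _ ≤ B * (((n:ℝ)+1)^2)⁻¹ := by
        rw [← step3]; exact mul_le_mul_of_nonneg_left step2 hBnn


private noncomputable def Fker (Λ : ℕ → ℝ) (c : ℕ → ℂ) (n : ℕ) (σ : ℝ) (k : ℕ) (t : ℝ) : ℂ :=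
  (c k * Complex.exp (-(Λ k : ℂ) * (↑σ + ↑t * Complex.I))) *
    Complex.exp ((Λ n : ℂ) * Complex.I * ↑t)

set_option maxHeartbeats 1000000 in
lemma keybound (Λ : ℕ → ℝ) (φ : ℂ → ℂ) (M : ℝ) (c : ℕ → ℂ)
    (hmono : StrictMono Λ)
    (hrep : ∀ z : ℂ, HasSum (fun k => c k * Complex.exp (-(Λ k : ℂ) * z))
      ((M : ℂ)⁻¹ * Complex.exp (-(Λ 1 : ℂ) * φ z)))
    (hsum : ∀ σ : ℝ, Summable (fun k => ‖c k‖ * Real.exp (-(Λ k) * σ)))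
    (hsmall : ∀ z : ℂ, z.re < 0 →
      ‖(M : ℂ)⁻¹ * Complex.exp (-(Λ 1 : ℂ) * φ z)‖ ≤ Real.exp (-(Λ 1) * z.re))
    (n : ℕ) (hn : 2 ≤ n) (σ : ℝ) (hσ : σ < 0) :
    ‖c n‖ * Real.exp (-(Λ n) * σ) ≤ Real.exp (-(Λ 1) * σ) := by
  set δ : ℝ := min (Λ n - Λ (n-1)) (Λ (n+1) - Λ n) with hδdef
  have hδ : 0 < δ := lt_min (sub_pos.2 (hmono (Nat.sub_lt (by omega) one_pos)))
    (sub_pos.2 (hmono (Nat.lt_succ_self n)))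
  have hgap : ∀ k, k ≠ n → δ ≤ |Λ n - Λ k| := by
    intro k hk
    rcases lt_or_gt_of_ne hk with h | h
    · have h1 : Λ k ≤ Λ (n-1) := hmono.monotone (by omega)
      have h2 : δ ≤ Λ n - Λ (n-1) := min_le_left _ _
      exact le_trans (by linarith) (le_abs_self _)
    · have h1 : Λ (n+1) ≤ Λ k := hmono.monotone (by omega)
      have h2 : δ ≤ Λ (n+1) - Λ n := min_le_right _ _
      calc δ ≤ Λ k - Λ n := by linarith
        _ ≤ |Λ n - Λ k| := by rw [abs_sub_comm]; exact le_abs_self _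
  set A : ℝ := ∑' k, ‖c k‖ * Real.exp (-(Λ k) * σ) with hAdef
  have hA0 : 0 ≤ A := hAdef ▸ tsum_nonneg (fun k => by positivity)
  have hre : ∀ (r : ℝ) (t : ℝ), (-(r : ℂ) * (↑σ + ↑t * I)).re = -r * σ := by
    intro r t
    simp [Complex.mul_re, Complex.add_re, Complex.add_im, Complex.mul_im]
  have him : ∀ (r : ℝ) (t : ℝ), (((r : ℂ)) * I * ↑t).re = 0 := by
    intro r t
    simp [Complex.mul_re, Complex.mul_im]
  -- main estimate for each T > 0
  have main : ∀ T : ℝ, 0 < T →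
      ‖c n‖ * Real.exp (-(Λ n) * σ) * (2*T) ≤ Real.exp (-(Λ 1) * σ) * (2*T) + A * (2/δ) := by
    intro T hT
    have hFnorm : ∀ k t, ‖Fker Λ c n σ k t‖ = ‖c k‖ * Real.exp (-(Λ k) * σ) := by
      intro k t
      rw [Fker]
      simp only [norm_mul, Complex.norm_exp, hre, him, Real.exp_zero, mul_one]
    have hFcont : ∀ k, Continuous (Fker Λ c n σ k) := by
      intro k
      unfold Fker
      apply Continuous.mul
      · exact continuous_const.mul (Complex.continuous_exp.comp (by fun_prop))
      · exact Complex.continuous_exp.comp (by fun_prop)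
    have hHasSumF : ∀ t : ℝ, HasSum (fun k => Fker Λ c n σ k t)
        (((M : ℂ)⁻¹ * Complex.exp (-(Λ 1 : ℂ) * φ (↑σ + ↑t * I))) *
          Complex.exp ((Λ n : ℂ) * I * ↑t)) := by
      intro t
      exact HasSum.mul_right _ (hrep ((σ:ℂ) + (t:ℂ) * I))
    have hInt : HasSum (fun k => ∫ t in (-T)..T, Fker Λ c n σ k t)
        (∫ t in (-T)..T, ((M : ℂ)⁻¹ * Complex.exp (-(Λ 1 : ℂ) * φ (↑σ + ↑t * I))) *
          Complex.exp ((Λ n : ℂ) * I * ↑t)) := by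
      apply intervalIntegral.hasSum_integral_of_dominated_convergence
        (bound := fun k (_ : ℝ) => ‖c k‖ * Real.exp (-(Λ k) * σ))
      · exact fun k => (hFcont k).aestronglyMeasurable
      · intro k
        filter_upwards with t _
        exact (hFnorm k t).le
      · filter_upwards with t _
        exact hsum σ
      · exact intervalIntegrable_const
      · filter_upwards with t _
        exact hHasSumF t
    -- rewrite F in separated form
    have hFeq : ∀ k t, Fker Λ c n σ k t =
        (c k * Complex.exp (-(Λ k : ℂ) * ↑σ)) * Complex.exp ((((Λ n - Λ k : ℝ)) : ℂ) * I * ↑t) := by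
      intro k t
      rw [Fker]
      simp only [mul_assoc, ← Complex.exp_add]
      congr 2
      push_cast
      ring
    -- value of the n-th integral
    have hIn : (∫ t in (-T)..T, Fker Λ c n σ n t)
        = (c n * Complex.exp (-(Λ n : ℂ) * ↑σ)) * (2*T : ℝ) := by
      have h1 : ∀ t : ℝ, Fker Λ c n σ n t = (c n * Complex.exp (-(Λ n : ℂ) * ↑σ)) := by
        intro t
        rw [hFeq n t]
        simp
      rw [intervalIntegral.integral_congr (fun t _ => h1 t), intervalIntegral.integral_const]
      rw [sub_neg_eq_add, real_smul]
      push_cast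
      ring
    -- bound on the k-th integral, k ≠ n
    have hIk : ∀ k, k ≠ n →
        ‖∫ t in (-T)..T, Fker Λ c n σ k t‖ ≤ (‖c k‖ * Real.exp (-(Λ k) * σ)) * (2/δ) := by
      intro k hk
      have hΛne : Λ n - Λ k ≠ 0 := sub_ne_zero.2 fun h => hk (hmono.injective h).symm
      have ha : ((Λ n - Λ k : ℝ) : ℂ) * I ≠ 0 :=
        mul_ne_zero (Complex.ofReal_ne_zero.mpr hΛne) Complex.I_ne_zero
      have hnorme : ∀ s : ℝ, ‖Complex.exp ((((Λ n - Λ k : ℝ)) : ℂ) * I * (s:ℂ))‖ = 1 := by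
        intro s
        rw [Complex.norm_exp, him, Real.exp_zero]
      have hna : ‖(((Λ n - Λ k : ℝ)) : ℂ) * I‖ = |Λ n - Λ k| := by
        rw [norm_mul, Complex.norm_I, mul_one,
          Complex.norm_real, Real.norm_eq_abs]
      have h2 : ‖Complex.exp (-(Λ k : ℂ) * ↑σ)‖ = Real.exp (-(Λ k) * σ) := by
        rw [Complex.norm_exp]
        congr 1
        rw [show -(Λ k : ℂ) * (σ:ℂ) = ((-(Λ k) * σ : ℝ):ℂ) by push_cast; ring]
        simp
      rw [intervalIntegral.integral_congr (fun t _ => hFeq k t),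
        intervalIntegral.integral_const_mul, integral_exp_mul_complex ha,
        norm_mul, norm_mul, norm_div, h2, hna]
      have h1 : ‖Complex.exp ((((Λ n - Λ k : ℝ)) : ℂ) * I * ((T:ℝ):ℂ))
          - Complex.exp ((((Λ n - Λ k : ℝ)) : ℂ) * I * ((-T:ℝ):ℂ))‖ ≤ 2 := by
        calc ‖Complex.exp ((((Λ n - Λ k : ℝ)) : ℂ) * I * ((T:ℝ):ℂ))
            - Complex.exp ((((Λ n - Λ k : ℝ)) : ℂ) * I * ((-T:ℝ):ℂ))‖
            ≤ ‖Complex.exp ((((Λ n - Λ k : ℝ)) : ℂ) * I * ((T:ℝ):ℂ))‖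
              + ‖Complex.exp ((((Λ n - Λ k : ℝ)) : ℂ) * I * ((-T:ℝ):ℂ))‖ := norm_sub_le _ _
          _ = 2 := by rw [hnorme T, hnorme (-T)]; norm_num
      exact mul_le_mul_of_nonneg_left (div_le_div₀ (by norm_num : (0:ℝ) ≤ 2) h1 hδ (hgap k hk))
        (by positivity)
    -- put it together
    have hsummJ := hInt.summable
    have htsum := hInt.tsum_eq
    have hsplit := Summable.tsum_eq_add_tsum_ite hsummJ n
    have hrest : ‖∑' k, if k = n then 0 else ∫ t in (-T)..T, Fker Λ c n σ k t‖ ≤ A * (2/δ) := by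
      have hbnd : ∀ k, ‖if k = n then 0 else ∫ t in (-T)..T, Fker Λ c n σ k t‖
          ≤ (‖c k‖ * Real.exp (-(Λ k) * σ)) * (2/δ) := by
        intro k
        by_cases hk : k = n
        · subst hk
          rw [if_pos rfl, norm_zero]
          have h2δ : (0:ℝ) ≤ 2/δ := div_nonneg two_pos.le hδ.le
          exact mul_nonneg (by positivity) h2δ
        · rw [if_neg hk]
          exact hIk k hk
      have hsum2 : Summable (fun k => (‖c k‖ * Real.exp (-(Λ k) * σ)) * (2/δ)) :=
        (hsum σ).mul_right _
      have hsum3 : Summable (fun k => ‖if k = n then 0 else ∫ t in (-T)..T, Fker Λ c n σ k t‖) :=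
        Summable.of_nonneg_of_le (fun k => norm_nonneg _) hbnd hsum2
      calc ‖∑' k, if k = n then 0 else ∫ t in (-T)..T, Fker Λ c n σ k t‖
          ≤ ∑' k, ‖if k = n then 0 else ∫ t in (-T)..T, Fker Λ c n σ k t‖ :=
            norm_tsum_le_tsum_norm hsum3
        _ ≤ ∑' k, (‖c k‖ * Real.exp (-(Λ k) * σ)) * (2/δ) := Summable.tsum_le_tsum hbnd hsum3 hsum2
        _ = A * (2/δ) := by rw [tsum_mul_right, hAdef]
    have hS : ‖∫ t in (-T)..T, ((M : ℂ)⁻¹ * Complex.exp (-(Λ 1 : ℂ) * φ (↑σ + ↑t * I))) *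
          Complex.exp ((Λ n : ℂ) * I * ↑t)‖ ≤ Real.exp (-(Λ 1) * σ) * (2*T) := by
      have hb : ∀ t ∈ Set.uIoc (-T) T, ‖((M : ℂ)⁻¹ * Complex.exp (-(Λ 1 : ℂ) * φ (↑σ + ↑t * I))) *
          Complex.exp ((Λ n : ℂ) * I * ↑t)‖ ≤ Real.exp (-(Λ 1) * σ) := by
        intro t _
        rw [norm_mul]
        have hrez : ((↑σ + ↑t * I : ℂ)).re = σ := by simp
        have h1 := hsmall ((σ:ℂ) + (t:ℂ) * I) (by rw [hrez]; exact hσ)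
        rw [hrez] at h1
        have h2 : ‖Complex.exp ((Λ n : ℂ) * I * ↑t)‖ = 1 := by
          rw [Complex.norm_exp, him, Real.exp_zero]
        rw [h2, mul_one]
        exact h1
      have := intervalIntegral.norm_integral_le_of_norm_le_const hb
      rwa [show |T - (-T)| = 2*T by rw [show T - (-T) = 2*T by ring, abs_of_pos (by linarith)]]
        at this
    -- derive the inequality
    have hJn : ‖(∫ t in (-T)..T, Fker Λ c n σ n t)‖
        = ‖c n‖ * Real.exp (-(Λ n) * σ) * (2*T) := by
      rw [hIn, norm_mul, norm_mul]
      have h2 : ‖Complex.exp (-(Λ n : ℂ) * ↑σ)‖ = Real.exp (-(Λ n) * σ) := by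
        rw [Complex.norm_exp]
        congr 1
        rw [show -(Λ n : ℂ) * (σ:ℂ) = ((-(Λ n) * σ : ℝ):ℂ) by push_cast; ring]
        simp
      rw [h2, Complex.norm_real, Real.norm_eq_abs, abs_of_pos (by linarith)]
    have heq : (∫ t in (-T)..T, Fker Λ c n σ n t)
        = (∫ t in (-T)..T, ((M : ℂ)⁻¹ * Complex.exp (-(Λ 1 : ℂ) * φ (↑σ + ↑t * I))) *
            Complex.exp ((Λ n : ℂ) * I * ↑t))
          - ∑' k, if k = n then 0 else ∫ t in (-T)..T, Fker Λ c n σ k t := by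
      rw [← htsum, hsplit]
      ring
    calc ‖c n‖ * Real.exp (-(Λ n) * σ) * (2*T)
        = ‖(∫ t in (-T)..T, Fker Λ c n σ n t)‖ := hJn.symm
      _ ≤ ‖∫ t in (-T)..T, ((M : ℂ)⁻¹ * Complex.exp (-(Λ 1 : ℂ) * φ (↑σ + ↑t * I))) *
            Complex.exp ((Λ n : ℂ) * I * ↑t)‖
          + ‖∑' k, if k = n then 0 else ∫ t in (-T)..T, Fker Λ c n σ k t‖ := by
          rw [heq]; exact norm_sub_le _ _
      _ ≤ Real.exp (-(Λ 1) * σ) * (2*T) + A * (2/δ) := add_le_add hS hrest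
  -- let T → ∞
  apply le_of_forall_pos_le_add
  intro ε hε
  set T : ℝ := max 1 (A / (δ * ε)) with hTdef
  have hT : 0 < T := lt_of_lt_of_le one_pos (le_max_left _ _)
  have hAT : A ≤ ε * (δ * T) := by
    have h := le_max_right 1 (A / (δ * ε))
    calc A = (A / (δ * ε)) * (δ * ε) := by field_simp
      _ ≤ T * (δ * ε) := mul_le_mul_of_nonneg_right h (by positivity)
      _ = ε * (δ * T) := by ring
  have h := main T hT
  have h2 : A * (2/δ) ≤ 2 * ε * T := by
    rw [mul_div_assoc']
    rw [div_le_iff₀ hδ]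
    nlinarith
  nlinarith



/-- `λ_1 = 0` case, key coefficient-killing step. Suppose `C_φ` is bounded on
`H(E,β)` for an entire `φ` not of the form `z + b`, `M > 0`, and
`g(z) = M⁻¹ e^{-λ_2 φ(z)}` admits a Dirichlet expansion `g = Σ c_n e^{-λ_n z}` in `H(E,β)`
with `‖g z‖ < e^{-λ_2 Re z}` whenever `Re z < 0`. Then `c_n = 0` for all `n > 2`, and hence
`e^{-λ_2 φ(z)} = a₁ + a₂ e^{-λ_2 z}` with `a₁ = M c₁`, `a₂ = M c₂`. -/
theorem stmt_15 (Λ : ℕ → ℝ) (β : ℕ → ℝ) (φ : ℂ → ℂ) (M : ℝ) (c : ℕ → ℂ)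
    (hmono : StrictMono Λ) (hpos : ∀ n, 0 ≤ Λ n)
    (htop : Tendsto Λ atTop atTop)
    (hL : IsBoundedUnder (· ≤ ·) atTop (fun n : ℕ => Real.log ((n : ℝ) + 1) / Λ n))
    (hβ : ∀ n, 0 < β n)
    (hE : Tendsto (fun n => Real.log (β n) / Λ n) atTop atTop)
    (hΛ0 : Λ 0 = 0)
    (hφ : Differentiable ℂ φ)
    (hnotshift : ¬ ∃ b : ℂ, ∀ z : ℂ, φ z = z + b)
    (hbdd : ∃ C : ℝ, ∀ a : ℕ → ℂ, Summable (fun n => ‖a n‖ ^ 2 * (β n) ^ 2) →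
      ∃ b : ℕ → ℂ, Summable (fun n => ‖b n‖ ^ 2 * (β n) ^ 2) ∧
        (∀ z : ℂ, HasSum (fun n => b n * Complex.exp (-(Λ n : ℂ) * z))
          (∑' n, a n * Complex.exp (-(Λ n : ℂ) * φ z))) ∧
        ∑' n, ‖b n‖ ^ 2 * (β n) ^ 2 ≤ C * ∑' n, ‖a n‖ ^ 2 * (β n) ^ 2)
    (hM : 0 < M)
    (hrep : ∀ z : ℂ, HasSum (fun n => c n * Complex.exp (-(Λ n : ℂ) * z))
      ((M : ℂ)⁻¹ * Complex.exp (-(Λ 1 : ℂ) * φ z)))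
    (hmem : Summable (fun n => ‖c n‖ ^ 2 * (β n) ^ 2))
    (hsmall : ∀ z : ℂ, z.re < 0 →
      ‖(M : ℂ)⁻¹ * Complex.exp (-(Λ 1 : ℂ) * φ z)‖ < Real.exp (-(Λ 1) * z.re)) :
    (∀ n : ℕ, 2 ≤ n → c n = 0) ∧
    ∀ z : ℂ, Complex.exp (-(Λ 1 : ℂ) * φ z)
      = (M : ℂ) * c 0 + (M : ℂ) * c 1 * Complex.exp (-(Λ 1 : ℂ) * z) := by
  -- uniform bound on coefficients
  have hBs : ∀ k, ‖c k‖ * β k ≤ Real.sqrt (∑' n, ‖c n‖ ^ 2 * (β n) ^ 2) := by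
    intro k
    have h1 : ‖c k‖ ^ 2 * β k ^ 2 ≤ ∑' n, ‖c n‖ ^ 2 * (β n) ^ 2 :=
      Summable.le_tsum hmem k (fun j _ => by positivity)
    have h2 : (‖c k‖ * β k) ^ 2 = ‖c k‖ ^ 2 * β k ^ 2 := by ring
    have h3 := Real.sqrt_le_sqrt h1
    rw [← h2] at h3
    calc ‖c k‖ * β k = Real.sqrt ((‖c k‖ * β k) ^ 2) :=
          (Real.sqrt_sq (mul_nonneg (norm_nonneg _) (hβ k).le)).symm
      _ ≤ _ := h3
  obtain ⟨L, hL'⟩ := hL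
  rw [Filter.eventually_map] at hL'
  have hΛpos : ∀ᶠ n : ℕ in atTop, 0 < Λ n := by
    rw [Filter.eventually_atTop]
    exact ⟨1, fun n hn => hΛ0 ▸ hmono (by omega)⟩
  have hsum : ∀ σ : ℝ, Summable (fun k => ‖c k‖ * Real.exp (-(Λ k) * σ)) :=
    sum_aux Λ β c _ L hBs hβ hL' hΛpos hE
  have hsmall' : ∀ z : ℂ, z.re < 0 →
      ‖(M : ℂ)⁻¹ * Complex.exp (-(Λ 1 : ℂ) * φ z)‖ ≤ Real.exp (-(Λ 1) * z.re) :=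
    fun z h => (hsmall z h).le
  have hzero : ∀ n : ℕ, 2 ≤ n → c n = 0 := by
    intro n hn
    have hb : ∀ σ : ℝ, σ < 0 → ‖c n‖ ≤ Real.exp ((Λ n - Λ 1) * σ) := by
      intro σ hσ
      have h := keybound Λ φ M c hmono hrep hsum hsmall' n hn σ hσ
      rw [show (Λ n - Λ 1) * σ = (-(Λ 1) * σ) - (-(Λ n) * σ) by ring, Real.exp_sub,
        le_div_iff₀ (Real.exp_pos _)]
      exact h
    have hΛgt : 0 < Λ n - Λ 1 := sub_pos.2 (hmono (by omega))
    have hle : ‖c n‖ ≤ 0 := by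
      apply le_of_forall_pos_le_add
      intro ε hε
      rw [zero_add]
      set σ : ℝ := min (-1) (Real.log ε / (Λ n - Λ 1)) with hσdef
      have hσ : σ < 0 := lt_of_le_of_lt (min_le_left _ _) (by norm_num)
      have h1 : (Λ n - Λ 1) * σ ≤ Real.log ε := by
        have h2 : σ ≤ Real.log ε / (Λ n - Λ 1) := min_le_right _ _
        have := mul_le_mul_of_nonneg_left h2 hΛgt.le
        rwa [mul_div_cancel₀ _ hΛgt.ne'] at this
      calc ‖c n‖ ≤ Real.exp ((Λ n - Λ 1) * σ) := hb σ hσ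
        _ ≤ Real.exp (Real.log ε) := Real.exp_le_exp.2 h1
        _ = ε := Real.exp_log hε
    exact norm_le_zero_iff.mp hle
  refine ⟨hzero, fun z => ?_⟩
  have ht := (hrep z).tsum_eq
  have hz : ∀ k ∉ ({0, 1} : Finset ℕ), c k * Complex.exp (-(Λ k : ℂ) * z) = 0 := by
    intro k hk
    simp only [Finset.mem_insert, Finset.mem_singleton] at hk
    push_neg at hk
    rw [hzero k (by omega), zero_mul]
  rw [tsum_eq_sum hz] at ht
  have hsum01 : ∑ k ∈ ({0, 1} : Finset ℕ), c k * Complex.exp (-(Λ k : ℂ) * z)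
      = c 0 + c 1 * Complex.exp (-(Λ 1 : ℂ) * z) := by
    rw [Finset.sum_insert (by norm_num), Finset.sum_singleton, hΛ0]
    norm_num
  rw [hsum01] at ht
  have hM0 : (M : ℂ) ≠ 0 := Complex.ofReal_ne_zero.mpr hM.ne'
  have hE2 : Complex.exp (-(Λ 1 : ℂ) * φ z)
      = (M : ℂ) * (c 0 + c 1 * Complex.exp (-(Λ 1 : ℂ) * z)) := by
    rw [ht, ← mul_assoc, mul_inv_cancel₀ hM0, one_mul]
  rw [hE2]
  ring
end

section
/- Assume condition (E) with λ_1 = 0 and suppose there is B > 1 with Σ_{n≥1} β_n^{-2} e^{-2λ_n Re(φ(w))} ≤ B Σ_{n≥1} β_n^{-2} e^{-2λ_n Re(w)} for all w ∈ ℂ, where φ is entire and ψ(z) = z - φ(z) is nonconstant. Then the function Q(z) = e^{λ_2 ψ(z)} is bounded on the half-plane Re(z) < 0. -/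
open Filter Complex

set_option maxHeartbeats 1600000 in
private lemma stmt19_summable (Λ : ℕ → ℝ) (β : ℕ → ℝ)
    (hmono : StrictMono Λ)
    (hL : IsBoundedUnder (· ≤ ·) atTop (fun n : ℕ => Real.log ((n : ℝ) + 1) / Λ n))
    (hβ : ∀ n, 0 < β n)
    (hE : Tendsto (fun n => Real.log (β n) / Λ n) atTop atTop)
    (hΛ0 : Λ 0 = 0) (x : ℝ) :
    Summable (fun n => Real.exp (-2 * Λ n * x) / (β n) ^ 2) := by
  obtain ⟨L, hLev⟩ := hL
  rw [Filter.eventually_map] at hLev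
  set K : ℝ := max L 0 + 1 with hK
  have hK0 : 0 < K := by positivity
  have hLK : L ≤ K := le_trans (le_max_left _ _) (by linarith [hK.ge])
  have h1 : ∀ᶠ n : ℕ in atTop, |x| + 2 * K ≤ Real.log (β n) / Λ n :=
    hE.eventually_ge_atTop _
  have h2 : ∀ᶠ n : ℕ in atTop, 1 ≤ n := eventually_ge_atTop 1
  obtain ⟨N, hN⟩ := (hLev.and (h1.and h2)).exists_forall_of_atTop
  have hΛ1 : 0 < Λ 1 := by rw [← hΛ0]; exact hmono one_pos
  have key : ∀ n ≥ N, Real.exp (-2 * Λ n * x) / (β n) ^ 2 ≤ 1 / ((n : ℝ) + 1) ^ 2 := by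
    intro n hn
    obtain ⟨hA, hB', hC⟩ := hN n hn
    have hΛn : 0 < Λ n := lt_of_lt_of_le hΛ1 (hmono.monotone hC)
    have hlog1 : Real.log ((n : ℝ) + 1) ≤ K * Λ n := by
      rw [div_le_iff₀ hΛn] at hA
      calc Real.log ((n : ℝ) + 1) ≤ L * Λ n := hA
        _ ≤ K * Λ n := by nlinarith
    have hlog2 : (|x| + 2 * K) * Λ n ≤ Real.log (β n) := by
      rw [le_div_iff₀ hΛn] at hB'; linarith
    have hf : Real.exp (-2 * Λ n * x) / (β n) ^ 2
        = Real.exp (-2 * Λ n * x - 2 * Real.log (β n)) := by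
      rw [Real.exp_sub]
      congr 1
      rw [show (2:ℝ) * Real.log (β n) = Real.log (β n) + Real.log (β n) by ring,
        Real.exp_add, Real.exp_log (hβ n), sq]
    rw [hf]
    have hexp : -2 * Λ n * x - 2 * Real.log (β n) ≤ -(2 * Real.log ((n : ℝ) + 1)) := by
      have hax : -2 * Λ n * x ≤ 2 * Λ n * |x| := by
        nlinarith [neg_abs_le x, hΛn.le]
      nlinarith [hlog1, hlog2, hΛn.le]
    calc Real.exp (-2 * Λ n * x - 2 * Real.log (β n))
        ≤ Real.exp (-(2 * Real.log ((n:ℝ)+1))) := Real.exp_le_exp.2 hexp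
      _ = 1 / ((n : ℝ) + 1) ^ 2 := by
          rw [Real.exp_neg, show (2:ℝ) * Real.log ((n:ℝ)+1)
              = Real.log ((n:ℝ)+1) + Real.log ((n:ℝ)+1) by ring,
            Real.exp_add, Real.exp_log (by positivity), one_div, sq]
  have hg : Summable (fun n : ℕ => 1 / ((n : ℝ) + 1) ^ 2) := by
    have := (summable_nat_add_iff (f := fun n : ℕ => 1 / (n : ℝ) ^ 2) 1).2
      (Real.summable_one_div_nat_pow.2 one_lt_two)
    refine this.congr fun n => by push_cast; ring_nf
  refine (summable_nat_add_iff N).1 ?_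
  apply Summable.of_nonneg_of_le (fun n => by positivity)
    (fun n => key (n + N) (Nat.le_add_left N n))
  exact (summable_nat_add_iff N).2 hg

set_option maxHeartbeats 1600000 in
/-- `λ_1 = 0` case: if `φ` is entire, `ψ(z) = z - φ(z)` is nonconstant, and
there is `B > 1` with `Σ β_n⁻² e^{-2 λ_n Re(φ w)} ≤ B Σ β_n⁻² e^{-2 λ_n Re w}` for all `w`
(i.e. `‖k_{φ(w)}‖² ≤ B ‖k_w‖²`), then `Q(z) = e^{λ_2 ψ(z)}` is bounded on the half-plane
`Re z < 0`. -/
theorem stmt_19 (Λ : ℕ → ℝ) (β : ℕ → ℝ) (φ : ℂ → ℂ) (B : ℝ)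
    (hmono : StrictMono Λ) (hpos : ∀ n, 0 ≤ Λ n)
    (htop : Tendsto Λ atTop atTop)
    (hL : IsBoundedUnder (· ≤ ·) atTop (fun n : ℕ => Real.log ((n : ℝ) + 1) / Λ n))
    (hβ : ∀ n, 0 < β n)
    (hE : Tendsto (fun n => Real.log (β n) / Λ n) atTop atTop)
    (hΛ0 : Λ 0 = 0)
    (hφ : Differentiable ℂ φ)
    (hψ : ¬ ∃ c : ℂ, ∀ z : ℂ, z - φ z = c)
    (hB : 1 < B)
    (hineq : ∀ w : ℂ,
      ∑' n, Real.exp (-2 * Λ n * (φ w).re) / (β n) ^ 2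
        ≤ B * ∑' n, Real.exp (-2 * Λ n * w.re) / (β n) ^ 2) :
    ∃ M : ℝ, ∀ z : ℂ, z.re < 0 →
      ‖Complex.exp ((Λ 1 : ℂ) * (z - φ z))‖ ≤ M := by
  have hsum : ∀ x : ℝ, Summable (fun n => Real.exp (-2 * Λ n * x) / (β n) ^ 2) :=
    stmt19_summable Λ β hmono hL hβ hE hΛ0
  have hΛ1 : 0 < Λ 1 := by rw [← hΛ0]; exact hmono one_pos
  have hb0 : (0:ℝ) < (β 0) ^ 2 := pow_pos (hβ 0) 2
  have hb1 : (0:ℝ) < (β 1) ^ 2 := pow_pos (hβ 1) 2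
  have hq0 : (0:ℝ) < (β 1) ^ 2 / (β 0) ^ 2 := div_pos hb1 hb0
  set t₀ : ℝ := B * (1 + (β 1) ^ 2 / (β 0) ^ 2) + 1 with ht₀
  have hB0 : (0:ℝ) < B := lt_trans one_pos hB
  have ht₀1 : 1 < t₀ := by
    have h := mul_pos hB0 (by linarith : (0:ℝ) < 1 + (β 1) ^ 2 / (β 0) ^ 2)
    rw [ht₀]; linarith
  set c : ℝ := Real.log t₀ / (2 * Λ 1) with hc
  have hc0 : 0 < c := div_pos (Real.log_pos ht₀1) (by linarith)
  have hexpc : Real.exp (2 * Λ 1 * c) = t₀ := by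
    rw [hc, mul_div_cancel₀ _ (by positivity), Real.exp_log (by linarith)]
  refine ⟨Real.exp (Λ 1 * c), fun z hz => ?_⟩
  set y : ℝ := z.re with hy
  set x : ℝ := (φ z).re with hx
  have hnorm : ‖Complex.exp ((Λ 1 : ℂ) * (z - φ z))‖ = Real.exp (Λ 1 * (y - x)) := by
    rw [Complex.norm_exp]
    congr 1
    simp [Complex.mul_re, Complex.sub_re]
    left; rfl
  rw [hnorm, Real.exp_le_exp]
  -- tail sums
  have hsumR : ∀ w : ℝ, Summable (fun n => Real.exp (-2 * Λ (n+1) * w) / (β (n+1)) ^ 2) :=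
    fun w => (summable_nat_add_iff 1).2 (hsum w)
  have hsplit : ∀ w : ℝ, (∑' n, Real.exp (-2 * Λ n * w) / (β n) ^ 2)
      = 1 / (β 0) ^ 2 + ∑' n, Real.exp (-2 * Λ (n+1) * w) / (β (n+1)) ^ 2 := by
    intro w
    rw [Summable.tsum_eq_zero_add (hsum w)]
    congr 1
    rw [hΛ0]
    norm_num
  set R : ℝ → ℝ := fun w => ∑' n, Real.exp (-2 * Λ (n+1) * w) / (β (n+1)) ^ 2 with hR
  -- R y ≥ 1/β₁²
  have hRy1 : 1 / (β 1) ^ 2 ≤ R y := by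
    have h1 : Real.exp (-2 * Λ (0+1) * y) / (β (0+1)) ^ 2 ≤ R y :=
      Summable.le_tsum (hsumR y) 0 (fun j _ => by positivity)
    simp only [Nat.zero_add] at h1
    refine le_trans ?_ h1
    apply div_le_div_of_nonneg_right ?_ hb1.le
    calc (1:ℝ) = Real.exp 0 := Real.exp_zero.symm
      _ ≤ Real.exp (-2 * Λ 1 * y) := Real.exp_le_exp.2 (by nlinarith)
  have hRy0 : 0 < R y := lt_of_lt_of_le (by positivity) hRy1
  have hkey : y - c ≤ x := by
    by_contra hcon
    push_neg at hcon
    have hstep1 : (∑' n, Real.exp (-2 * Λ n * x) / (β n) ^ 2)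
        ≤ B * ∑' n, Real.exp (-2 * Λ n * y) / (β n) ^ 2 := hineq z
    have hstep2 : (∑' n, Real.exp (-2 * Λ n * (y - c)) / (β n) ^ 2)
        ≤ ∑' n, Real.exp (-2 * Λ n * x) / (β n) ^ 2 := by
      apply Summable.tsum_le_tsum _ (hsum (y - c)) (hsum x)
      intro n
      apply div_le_div_of_nonneg_right (Real.exp_le_exp.2 ?_) (pow_pos (hβ n) 2).le
      nlinarith [hpos n, hcon.le]
    have hstep3 : t₀ * R y ≤ R (y - c) := by
      rw [hR, ← tsum_mul_left]
      apply Summable.tsum_le_tsum _ ((hsumR y).mul_left t₀) (hsumR (y - c))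
      intro n
      have hmge : t₀ ≤ Real.exp (2 * Λ (n+1) * c) := by
        rw [← hexpc]
        apply Real.exp_le_exp.2
        have := hmono.monotone (Nat.succ_le_succ (Nat.zero_le n))
        nlinarith [hc0.le]
      have heq : Real.exp (-2 * Λ (n+1) * (y - c))
          = Real.exp (2 * Λ (n+1) * c) * Real.exp (-2 * Λ (n+1) * y) := by
        rw [← Real.exp_add]; ring_nf
      rw [heq, mul_div_assoc]
      exact mul_le_mul_of_nonneg_right hmge (by positivity)
    have hstep4 : B * (∑' n, Real.exp (-2 * Λ n * y) / (β n) ^ 2) ≤ (t₀ - 1) * R y := by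
      have h1 : 1 / (β 0) ^ 2 ≤ (β 1) ^ 2 / (β 0) ^ 2 * R y := by
        have e1 : (β 1) ^ 2 * (1 / (β 1) ^ 2) ≤ (β 1) ^ 2 * R y :=
          mul_le_mul_of_nonneg_left hRy1 hb1.le
        have e2 : (β 1) ^ 2 * (1 / (β 1) ^ 2) = 1 := by rw [mul_one_div_cancel hb1.ne']
        have h1' : 1 ≤ (β 1) ^ 2 * R y := e2 ▸ e1
        rw [div_mul_eq_mul_div, div_le_div_iff₀ hb0 hb0]
        nlinarith [mul_le_mul_of_nonneg_right h1' hb0.le]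
      have hq := mul_le_mul_of_nonneg_left h1 hB0.le
      calc B * (∑' n, Real.exp (-2 * Λ n * y) / (β n) ^ 2)
          = B * (1 / (β 0) ^ 2) + B * R y := by rw [hsplit y]; ring
        _ ≤ B * ((β 1) ^ 2 / (β 0) ^ 2 * R y) + B * R y := by linarith
        _ = (t₀ - 1) * R y := by rw [ht₀]; ring
    have hchain : 1 / (β 0) ^ 2 + t₀ * R y ≤ (t₀ - 1) * R y := by
      calc 1 / (β 0) ^ 2 + t₀ * R y ≤ 1 / (β 0) ^ 2 + R (y - c) :=
            add_le_add_right hstep3 _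
        _ = ∑' n, Real.exp (-2 * Λ n * (y - c)) / (β n) ^ 2 := (hsplit (y - c)).symm
        _ ≤ (t₀ - 1) * R y := le_trans hstep2 (le_trans hstep1 hstep4)
    have h1β0 : (0:ℝ) < 1 / (β 0) ^ 2 := by positivity
    clear_value t₀ c R x y
    nlinarith [hRy0, h1β0, hchain]
  exact mul_le_mul_of_nonneg_left (by linarith) hΛ1.le
end
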